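/- arXiv:2603.04932 — 6 statements merged into one kernel-verified Lean document; each statement's English description precedes it below -/
import Mathlib

section
/- Let G be a connected simple graph on N vertices (N ≥ 1) with real Laplacian matrix L, and let B be the diagonal matrix whose i-th diagonal entry is μ_i ∈ {0,1}, where μ_i = 1 for at least one vertex i. Then the matrix L + B is positive definite. -/
/-- For a connected simple graph `G` on `N ≥ 1` vertices with real Laplacian matrix `L`,
and an informed matrix `B = diag(μ₁,…,μ_N)` with `μ i ∈ {0,1}` and at least one `μ i = 1`,
the matrix `L + B` is positive definite. -/
theorem lap_plus_informed_posDef (N : ℕ) (hN : 1 ≤ N)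
    (G : SimpleGraph (Fin N)) [DecidableRel G.Adj] (hG : G.Connected)
    (μ : Fin N → ℝ) (hμ : ∀ i, μ i = 0 ∨ μ i = 1) (hone : ∃ i, μ i = 1) :
    (G.lapMatrix ℝ + Matrix.diagonal μ).PosDef := by
  have hLsd := SimpleGraph.posSemidef_lapMatrix ℝ G
  rw [Matrix.posDef_iff_dotProduct_mulVec]
  constructor
  · exact Matrix.IsHermitian.add hLsd.1 (Matrix.isHermitian_diagonal_iff.mpr
      (fun i => IsSelfAdjoint.all (μ i)))
  intro x hx
  simp only [Matrix.add_mulVec, dotProduct_add, star_trivial]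
  have hdiag : dotProduct x (Matrix.mulVec (Matrix.diagonal μ) x) = ∑ i, μ i * (x i)^2 := by
    simp [dotProduct, Matrix.mulVec_diagonal]
    congr 1; ext i; ring
  have hμnn : ∀ i, 0 ≤ μ i * (x i)^2 := by
    intro i
    rcases hμ i with h | h <;> simp [h] <;> positivity
  have hL : 0 ≤ dotProduct x (Matrix.mulVec (G.lapMatrix ℝ) x) := by
    have := (Matrix.posSemidef_iff_dotProduct_mulVec.mp hLsd).2 x
    simpa using this
  have hD : 0 ≤ dotProduct x (Matrix.mulVec (Matrix.diagonal μ) x) := by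
    rw [hdiag]; exact Finset.sum_nonneg (fun i _ => hμnn i)
  rcases lt_or_eq_of_le hL with hL' | hL'
  · linarith
  rcases lt_or_eq_of_le hD with hD' | hD'
  · linarith
  -- both quadratic forms are zero: derive x = 0, contradiction
  exfalso
  apply hx
  have hconst : ∀ i j, x i = x j := by
    intro i j
    have h0 : Matrix.toLinearMap₂' ℝ (G.lapMatrix ℝ) x x = 0 := by
      rw [Matrix.toLinearMap₂'_apply']
      exact hL'.symm
    exact (SimpleGraph.lapMatrix_toLinearMap₂'_apply'_eq_zero_iff_forall_reachable G x).mp h0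
      i j (hG.preconnected i j)
  obtain ⟨i0, hi0⟩ := hone
  have hsum0 : ∑ i, μ i * (x i)^2 = 0 := by rw [← hdiag]; exact hD'.symm
  have hzero : μ i0 * (x i0)^2 = 0 :=
    (Finset.sum_eq_zero_iff_of_nonneg (fun i _ => hμnn i)).mp hsum0 i0 (Finset.mem_univ i0)
  have hx0 : x i0 = 0 := by
    rw [hi0, one_mul] at hzero
    exact pow_eq_zero_iff (by norm_num) |>.mp hzero
  funext j
  rw [show x j = x i0 from hconst j i0, hx0, Pi.zero_apply]
end

section
/- Let S and U be real symmetric positive semidefinite n×n matrices, let ζ ≥ 0, let x ∈ ℝⁿ, and set x⁺ = x − ζ(S + U)x. Then ‖x⁺‖² − ‖x‖² ≤ ( ζ²(λmax(U) + λmax(S))² − 2ζ·λmin(S) )·‖x‖², where λmax and λmin denote the largest and smallest eigenvalues. -/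
open Matrix
open scoped Classical

/-- The largest eigenvalue of a (Hermitian) real matrix. -/
noncomputable def lamMax {n : ℕ} (A : Matrix (Fin n) (Fin n) ℝ) : ℝ :=
  if h : A.IsHermitian then ⨆ i, h.eigenvalues i else 0

/-- The smallest eigenvalue of a (Hermitian) real matrix. -/
noncomputable def lamMin {n : ℕ} (A : Matrix (Fin n) (Fin n) ℝ) : ℝ :=
  if h : A.IsHermitian then ⨅ i, h.eigenvalues i else 0

lemma repr_toEuclideanLin_apply {n : ℕ} {A : Matrix (Fin n) (Fin n) ℝ}
    (hA : A.IsHermitian) (x : EuclideanSpace ℝ (Fin n)) (i : Fin n) :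
    hA.eigenvectorBasis.repr (Matrix.toEuclideanLin A x) i =
      hA.eigenvalues i * hA.eigenvectorBasis.repr x i := by
  have hT : (Matrix.toEuclideanLin A).IsSymmetric :=
    (Matrix.isHermitian_iff_isSymmetric).1 hA
  simp only [Matrix.IsHermitian.eigenvectorBasis, Matrix.IsHermitian.eigenvalues,
    Matrix.IsHermitian.eigenvalues₀, OrthonormalBasis.repr_reindex]
  exact hT.eigenvectorBasis_apply_self_apply finrank_euclideanSpace x _

lemma inner_toEuclideanLin_ge {n : ℕ} {A : Matrix (Fin n) (Fin n) ℝ}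
    (hA : A.IsHermitian) (x : EuclideanSpace ℝ (Fin n)) :
    lamMin A * ‖x‖ ^ 2 ≤ inner ℝ x (Matrix.toEuclideanLin A x) := by
  set b := hA.eigenvectorBasis
  have h1 : (inner ℝ x (Matrix.toEuclideanLin A x) : ℝ)
      = ∑ i, hA.eigenvalues i * (b.repr x i) ^ 2 := by
    rw [← b.repr.inner_map_map x (Matrix.toEuclideanLin A x)]
    rw [PiLp.inner_apply]
    refine Finset.sum_congr rfl fun i _ => ?_
    rw [repr_toEuclideanLin_apply hA x i]
    simp [RCLike.inner_apply]
    ring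
  have h2 : ‖x‖ ^ 2 = ∑ i, (b.repr x i) ^ 2 := by
    rw [← b.repr.norm_map x, EuclideanSpace.norm_eq]
    rw [Real.sq_sqrt (by positivity)]
    simp [sq_abs]
  rw [h1, h2, Finset.mul_sum]
  refine Finset.sum_le_sum fun i _ => ?_
  have : lamMin A ≤ hA.eigenvalues i := by
    rw [lamMin, dif_pos hA]
    exact ciInf_le (Set.Finite.bddBelow (Set.finite_range _)) i
  exact mul_le_mul_of_nonneg_right this (sq_nonneg _)

lemma eigenvalue_le_lamMax {n : ℕ} {A : Matrix (Fin n) (Fin n) ℝ}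
    (hA : A.IsHermitian) (i : Fin n) : hA.eigenvalues i ≤ lamMax A := by
  rw [lamMax, dif_pos hA]
  exact le_ciSup (Set.Finite.bddAbove (Set.finite_range _)) i

lemma lamMax_nonneg {n : ℕ} {A : Matrix (Fin n) (Fin n) ℝ}
    (hA : A.PosSemidef) : 0 ≤ lamMax A := by
  rw [lamMax, dif_pos hA.1]
  exact Real.iSup_nonneg fun i => hA.eigenvalues_nonneg i

lemma norm_toEuclideanLin_le {n : ℕ} {A : Matrix (Fin n) (Fin n) ℝ}
    (hA : A.PosSemidef) (x : EuclideanSpace ℝ (Fin n)) :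
    ‖Matrix.toEuclideanLin A x‖ ≤ lamMax A * ‖x‖ := by
  set b := hA.1.eigenvectorBasis
  have key : ‖Matrix.toEuclideanLin A x‖ ^ 2 ≤ (lamMax A * ‖x‖) ^ 2 := by
    have h1 : ‖Matrix.toEuclideanLin A x‖ ^ 2
        = ∑ i, (hA.1.eigenvalues i * b.repr x i) ^ 2 := by
      rw [← b.repr.norm_map, EuclideanSpace.norm_eq, Real.sq_sqrt (by positivity)]
      refine Finset.sum_congr rfl fun i _ => ?_
      rw [Real.norm_eq_abs, sq_abs, repr_toEuclideanLin_apply hA.1 x i]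
    have h2 : ‖x‖ ^ 2 = ∑ i, (b.repr x i) ^ 2 := by
      rw [← b.repr.norm_map x, EuclideanSpace.norm_eq, Real.sq_sqrt (by positivity)]
      simp [sq_abs]
    rw [h1, mul_pow, h2, Finset.mul_sum]
    refine Finset.sum_le_sum fun i _ => ?_
    rw [mul_pow]
    refine mul_le_mul_of_nonneg_right ?_ (sq_nonneg _)
    exact pow_le_pow_left₀ (hA.eigenvalues_nonneg i) (eigenvalue_le_lamMax hA.1 i) 2
  have h0 : 0 ≤ lamMax A * ‖x‖ := mul_nonneg (lamMax_nonneg hA) (norm_nonneg _)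
  exact le_of_pow_le_pow_left₀ two_ne_zero h0 key

lemma lamMin_nonneg {n : ℕ} {A : Matrix (Fin n) (Fin n) ℝ}
    (hA : A.PosSemidef) : 0 ≤ lamMin A := by
  rw [lamMin, dif_pos hA.1]
  exact Real.iInf_nonneg fun i => hA.eigenvalues_nonneg i

/-- One-step decrement of the Lyapunov function `V = ‖x‖²` for the adaptive estimator:
for symmetric PSD matrices `S`, `U`, gain `ζ ≥ 0`, and `x⁺ = x − ζ(S + U)x`,
`‖x⁺‖² − ‖x‖² ≤ (ζ²(λmax(U) + λmax(S))² − 2ζ·λmin(S))·‖x‖²`. -/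
theorem lyapunov_decrement (n : ℕ) (S U : Matrix (Fin n) (Fin n) ℝ)
    (hS : S.PosSemidef) (hU : U.PosSemidef) (ζ : ℝ) (hζ : 0 ≤ ζ)
    (x : EuclideanSpace ℝ (Fin n)) :
    ‖x - ζ • (Matrix.toEuclideanLin (S + U) x)‖ ^ 2 - ‖x‖ ^ 2
      ≤ (ζ ^ 2 * (lamMax U + lamMax S) ^ 2 - 2 * ζ * lamMin S) * ‖x‖ ^ 2 := by
  have hadd : Matrix.toEuclideanLin (S + U) x
      = Matrix.toEuclideanLin S x + Matrix.toEuclideanLin U x := by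
    rw [map_add]; rfl
  have hexp : ‖x - ζ • Matrix.toEuclideanLin (S + U) x‖ ^ 2
      = ‖x‖ ^ 2 - 2 * (ζ * inner ℝ x (Matrix.toEuclideanLin (S + U) x)) + ζ ^ 2 * ‖Matrix.toEuclideanLin (S + U) x‖ ^ 2 := by
    rw [norm_sub_sq_real, real_inner_smul_right, norm_smul]
    rw [mul_pow, Real.norm_eq_abs, sq_abs]
  have hinner : lamMin S * ‖x‖ ^ 2 ≤ inner ℝ x (Matrix.toEuclideanLin (S + U) x) := by
    rw [hadd, inner_add_right]
    have h1 := inner_toEuclideanLin_ge hS.1 x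
    have h2 := inner_toEuclideanLin_ge hU.1 x
    have h3 : (0 : ℝ) ≤ lamMin U * ‖x‖ ^ 2 :=
      mul_nonneg (lamMin_nonneg hU) (sq_nonneg _)
    linarith
  have hnormw : ‖Matrix.toEuclideanLin (S + U) x‖ ≤ (lamMax U + lamMax S) * ‖x‖ := by
    rw [hadd]
    calc ‖Matrix.toEuclideanLin S x + Matrix.toEuclideanLin U x‖
        ≤ ‖Matrix.toEuclideanLin S x‖ + ‖Matrix.toEuclideanLin U x‖ := norm_add_le _ _
      _ ≤ lamMax S * ‖x‖ + lamMax U * ‖x‖ :=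
          add_le_add (norm_toEuclideanLin_le hS x) (norm_toEuclideanLin_le hU x)
      _ = (lamMax U + lamMax S) * ‖x‖ := by ring
  have hnormw2 : ‖Matrix.toEuclideanLin (S + U) x‖ ^ 2 ≤ ((lamMax U + lamMax S) * ‖x‖) ^ 2 :=
    pow_le_pow_left₀ (norm_nonneg _) hnormw 2
  have hz2 : ζ ^ 2 * ‖Matrix.toEuclideanLin (S + U) x‖ ^ 2 ≤ ζ ^ 2 * ((lamMax U + lamMax S) * ‖x‖) ^ 2 :=
    mul_le_mul_of_nonneg_left hnormw2 (sq_nonneg _)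
  have hzin : ζ * (lamMin S * ‖x‖ ^ 2) ≤ ζ * inner ℝ x (Matrix.toEuclideanLin (S + U) x) :=
    mul_le_mul_of_nonneg_left hinner hζ
  rw [hexp]
  nlinarith [sq_nonneg ((lamMax U + lamMax S) * ‖x‖)]
end

section
/- Let S be a real symmetric positive definite n×n matrix and let (Φ_k)_{k∈ℕ} be vectors in ℝⁿ with ‖Φ_k‖ ≤ 1 for all k. Define the sequence x : ℕ → ℝⁿ by x_{k+1} = x_k − ζ_k (S + Φ_kΦ_kᵀ) x_k, where ζ_k = λmin(S)/(λmax(Φ_kΦ_kᵀ) + λmax(S))². Then for all k, ‖x_k‖ ≤ q^k ‖x_0‖, where q = √(1 − λmin(S)²/(1 + λmax(S))²) < 1; in particular x_k converges to 0 exponentially. -/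
open Matrix
open scoped Classical
open scoped RealInnerProductSpace

section Helpers

variable {n : ℕ}

lemma toEuclideanLin_eigBasis {A : Matrix (Fin n) (Fin n) ℝ} (hA : A.IsHermitian) (i : Fin n) :
    Matrix.toEuclideanLin A (hA.eigenvectorBasis i) = hA.eigenvalues i • hA.eigenvectorBasis i := by
  apply (WithLp.equiv 2 (Fin n → ℝ)).injective
  simpa using hA.mulVec_eigenvectorBasis i

lemma repr_toEuclideanLin {A : Matrix (Fin n) (Fin n) ℝ} (hA : A.IsHermitian)
    (x : EuclideanSpace ℝ (Fin n)) (i : Fin n) :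
    hA.eigenvectorBasis.repr (Matrix.toEuclideanLin A x) i
      = hA.eigenvalues i * hA.eigenvectorBasis.repr x i := by
  rw [OrthonormalBasis.repr_apply_apply, OrthonormalBasis.repr_apply_apply,
    ← (Matrix.isHermitian_iff_isSymmetric.1 hA) (hA.eigenvectorBasis i) x,
    toEuclideanLin_eigBasis hA i, real_inner_smul_left]

lemma norm_sq_repr (b : OrthonormalBasis (Fin n) ℝ (EuclideanSpace ℝ (Fin n)))
    (x : EuclideanSpace ℝ (Fin n)) :
    ‖x‖ ^ 2 = ∑ i, (b.repr x i) ^ 2 := by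
  rw [← b.repr.norm_map x, EuclideanSpace.norm_eq, Real.sq_sqrt (by positivity)]
  simp [sq_abs]

lemma inner_eq_sum_repr (b : OrthonormalBasis (Fin n) ℝ (EuclideanSpace ℝ (Fin n)))
    (x y : EuclideanSpace ℝ (Fin n)) :
    ⟪x, y⟫ = ∑ i, b.repr x i * b.repr y i := by
  rw [← b.repr.inner_map_map x y]
  simp only [PiLp.inner_apply, RCLike.inner_apply, starRingEnd_apply, star_trivial]
  exact Finset.sum_congr rfl fun _ _ => mul_comm _ _

lemma inner_toEuclideanLin_eq {A : Matrix (Fin n) (Fin n) ℝ} (hA : A.IsHermitian)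
    (x : EuclideanSpace ℝ (Fin n)) :
    ⟪x, Matrix.toEuclideanLin A x⟫
      = ∑ i, hA.eigenvalues i * (hA.eigenvectorBasis.repr x i) ^ 2 := by
  rw [inner_eq_sum_repr hA.eigenvectorBasis]
  refine Finset.sum_congr rfl fun i _ => ?_
  rw [repr_toEuclideanLin hA]
  ring

lemma rayleigh_lower {A : Matrix (Fin n) (Fin n) ℝ} (hA : A.IsHermitian) {a : ℝ}
    (ha : ∀ i, a ≤ hA.eigenvalues i) (x : EuclideanSpace ℝ (Fin n)) :
    a * ‖x‖ ^ 2 ≤ ⟪x, Matrix.toEuclideanLin A x⟫ := by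
  rw [inner_toEuclideanLin_eq hA, norm_sq_repr hA.eigenvectorBasis, Finset.mul_sum]
  exact Finset.sum_le_sum fun i _ =>
    mul_le_mul_of_nonneg_right (ha i) (sq_nonneg _)

lemma rayleigh_upper {A : Matrix (Fin n) (Fin n) ℝ} (hA : A.IsHermitian) {b : ℝ}
    (hb : ∀ i, hA.eigenvalues i ≤ b) (x : EuclideanSpace ℝ (Fin n)) :
    ⟪x, Matrix.toEuclideanLin A x⟫ ≤ b * ‖x‖ ^ 2 := by
  rw [inner_toEuclideanLin_eq hA, norm_sq_repr hA.eigenvectorBasis, Finset.mul_sum]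
  exact Finset.sum_le_sum fun i _ =>
    mul_le_mul_of_nonneg_right (hb i) (sq_nonneg _)

lemma eigenvalue_eq_inner {A : Matrix (Fin n) (Fin n) ℝ} (hA : A.IsHermitian) (i : Fin n) :
    hA.eigenvalues i
      = ⟪hA.eigenvectorBasis i, Matrix.toEuclideanLin A (hA.eigenvectorBasis i)⟫ := by
  rw [toEuclideanLin_eigBasis hA i, real_inner_smul_right,
    real_inner_self_eq_norm_sq, hA.eigenvectorBasis.orthonormal.1 i]
  ring

lemma inner_vecMulVec (u v : EuclideanSpace ℝ (Fin n)) :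
    ⟪v, Matrix.toEuclideanLin (vecMulVec u u) v⟫ = ⟪u, v⟫ ^ 2 := by
  have hv : ∀ i, (Matrix.toEuclideanLin (vecMulVec u u) v) i = ∑ j, u i * u j * v j := by
    intro i
    simp [Matrix.toEuclideanLin_apply, Matrix.mulVec, dotProduct, Matrix.vecMulVec_apply]
  simp only [PiLp.inner_apply, RCLike.inner_apply, starRingEnd_apply, star_trivial]
  rw [sq, Finset.sum_mul_sum]
  refine Finset.sum_congr rfl fun i _ => ?_
  rw [hv i, Finset.sum_mul]
  exact Finset.sum_congr rfl fun j _ => by ring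

lemma contraction {A : Matrix (Fin n) (Fin n) ℝ} (hA : A.IsHermitian) {ζ q : ℝ}
    (hq0 : 0 ≤ q) (hq : ∀ i, |1 - ζ * hA.eigenvalues i| ≤ q) (x : EuclideanSpace ℝ (Fin n)) :
    ‖x - ζ • Matrix.toEuclideanLin A x‖ ≤ q * ‖x‖ := by
  have key : ‖x - ζ • Matrix.toEuclideanLin A x‖ ^ 2 ≤ (q * ‖x‖) ^ 2 := by
    rw [norm_sq_repr hA.eigenvectorBasis, mul_pow, norm_sq_repr hA.eigenvectorBasis x,
      Finset.mul_sum]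
    refine Finset.sum_le_sum fun i _ => ?_
    rw [map_sub, _root_.map_smul]
    simp only [PiLp.sub_apply, PiLp.smul_apply, smul_eq_mul]
    rw [repr_toEuclideanLin hA]
    have h1 : hA.eigenvectorBasis.repr x i - ζ * (hA.eigenvalues i * hA.eigenvectorBasis.repr x i)
        = (1 - ζ * hA.eigenvalues i) * hA.eigenvectorBasis.repr x i := by ring
    rw [h1, mul_pow]
    have h2 : (1 - ζ * hA.eigenvalues i) ^ 2 ≤ q ^ 2 := by
      rw [← sq_abs]
      exact pow_le_pow_left₀ (abs_nonneg _) (hq i) 2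
    exact mul_le_mul_of_nonneg_right h2 (sq_nonneg _)
  calc ‖x - ζ • Matrix.toEuclideanLin A x‖
      = Real.sqrt (‖x - ζ • Matrix.toEuclideanLin A x‖ ^ 2) := (Real.sqrt_sq (norm_nonneg _)).symm
    _ ≤ Real.sqrt ((q * ‖x‖) ^ 2) := Real.sqrt_le_sqrt key
    _ = q * ‖x‖ := Real.sqrt_sq (by positivity)

end Helpers

set_option maxHeartbeats 1000000 in
/-- Exponential convergence of the data-driven adaptive relative-localization estimator:
with recorded data matrix `S` positive definite, normalized regression vectors `‖Φ_k‖ ≤ 1`,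
update `x_{k+1} = x_k − ζ_k (S + Φ_kΦ_kᵀ) x_k` with gain
`ζ_k = λmin(S)/(λmax(Φ_kΦ_kᵀ) + λmax(S))²`, the error satisfies `‖x_k‖ ≤ q^k ‖x_0‖` where
`q = √(1 − λmin(S)²/(1 + λmax(S))²) < 1`. -/
theorem adaptive_estimator_exponential_convergence (n : ℕ) (hn : 1 ≤ n)
    (S : Matrix (Fin n) (Fin n) ℝ) (hS : S.PosDef)
    (Φ : ℕ → EuclideanSpace ℝ (Fin n)) (hΦ : ∀ k, ‖Φ k‖ ≤ 1)
    (x : ℕ → EuclideanSpace ℝ (Fin n))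
    (hx : ∀ k, x (k + 1) = x k -
      (lamMin S / (lamMax (vecMulVec (Φ k) (Φ k)) + lamMax S) ^ 2) •
        (Matrix.toEuclideanLin (S + vecMulVec (Φ k) (Φ k)) (x k))) :
    (∀ k, ‖x k‖ ≤ (Real.sqrt (1 - lamMin S ^ 2 / (1 + lamMax S) ^ 2)) ^ k * ‖x 0‖) ∧
      Real.sqrt (1 - lamMin S ^ 2 / (1 + lamMax S) ^ 2) < 1 := by
  haveI : Nonempty (Fin n) := ⟨⟨0, hn⟩⟩
  have hSH : S.IsHermitian := hS.1
  have hminS : lamMin S = ⨅ i, hSH.eigenvalues i := dif_pos hSH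
  have hmaxS : lamMax S = ⨆ i, hSH.eigenvalues i := dif_pos hSH
  set m := lamMin S with hm
  set Ms := lamMax S with hMsdef
  obtain ⟨i0, hi0⟩ := Finite.exists_min fun i => hSH.eigenvalues i
  have hm_eq : m = hSH.eigenvalues i0 := by
    rw [hminS]
    exact le_antisymm (ciInf_le (Finite.bddBelow_range _) i0) (le_ciInf hi0)
  have hm_pos : 0 < m := hm_eq ▸ hS.eigenvalues_pos i0
  have hm_le : ∀ i, m ≤ hSH.eigenvalues i := fun i => hm_eq ▸ hi0 i
  have hMs_ge : ∀ i, hSH.eigenvalues i ≤ Ms := fun i => by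
    rw [hmaxS]; exact le_ciSup (Finite.bddAbove_range _) i
  have hmMs : m ≤ Ms := le_trans (hm_le i0) (hMs_ge i0)
  have hMs_pos : 0 < Ms := lt_of_lt_of_le hm_pos hmMs
  have h1Ms : (0:ℝ) < 1 + Ms := by linarith
  set t := 1 - m ^ 2 / (1 + Ms) ^ 2 with ht
  set q := Real.sqrt t with hqdef
  have hmle1Ms : m ≤ 1 + Ms := by linarith
  have ht0 : 0 ≤ t := by
    have h : m ^ 2 / (1 + Ms) ^ 2 ≤ 1 := by
      rw [div_le_one (by positivity)]
      exact pow_le_pow_left₀ hm_pos.le hmle1Ms 2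
    rw [ht]; linarith
  have ht1 : t < 1 := by
    have h : 0 < m ^ 2 / (1 + Ms) ^ 2 := by positivity
    rw [ht]; linarith
  have hq0 : 0 ≤ q := Real.sqrt_nonneg t
  have hq1 : q < 1 := by
    rw [hqdef]
    exact (Real.sqrt_lt' one_pos).2 (by linarith)
  have hstep : ∀ k, ‖x (k + 1)‖ ≤ q * ‖x k‖ := by
    intro k
    have hxk := hx k
    set u := Φ k with hu
    have hP : (vecMulVec u u).IsHermitian := by
      ext i j
      simp [Matrix.conjTranspose_apply, Matrix.vecMulVec_apply, mul_comm]
    have hA : (S + vecMulVec u u).IsHermitian := hSH.add hP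
    set p := lamMax (vecMulVec u u) with hpdef
    have hp_eq : p = ⨆ i, hP.eigenvalues i := dif_pos hP
    have hPev : ∀ i, 0 ≤ hP.eigenvalues i ∧ hP.eigenvalues i ≤ 1 := by
      intro i
      have h1 : hP.eigenvalues i = (⟪u, hP.eigenvectorBasis i⟫) ^ 2 := by
        rw [eigenvalue_eq_inner hP i, inner_vecMulVec]
      refine ⟨h1 ▸ sq_nonneg _, ?_⟩
      rw [h1]
      calc (⟪u, hP.eigenvectorBasis i⟫) ^ 2
          ≤ (‖u‖ * ‖hP.eigenvectorBasis i‖) ^ 2 := by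
            rw [← sq_abs]
            exact pow_le_pow_left₀ (abs_nonneg _) (abs_real_inner_le_norm _ _) 2
        _ ≤ 1 := by
            rw [hP.eigenvectorBasis.orthonormal.1 i, mul_one]
            exact pow_le_one₀ (norm_nonneg _) (hΦ k)
    have hp0 : 0 ≤ p := by
      rw [hp_eq]
      exact le_trans (hPev i0).1 (le_ciSup (Finite.bddAbove_range _) i0)
    have hp1 : p ≤ 1 := by
      rw [hp_eq]
      exact ciSup_le fun i => (hPev i).2
    have hp_ge : ∀ i, hP.eigenvalues i ≤ p := fun i => by
      rw [hp_eq]; exact le_ciSup (Finite.bddAbove_range _) i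
    set M := p + Ms with hMdef
    have hM_pos : 0 < M := by rw [hMdef]; linarith
    have hM_le : M ≤ 1 + Ms := by rw [hMdef]; linarith
    have hmM : m ≤ M := by rw [hMdef]; linarith
    have hAev : ∀ i, m ≤ hA.eigenvalues i ∧ hA.eigenvalues i ≤ M := by
      intro i
      set v := hA.eigenvectorBasis i with hv
      have hv1 : ‖v‖ = 1 := hA.eigenvectorBasis.orthonormal.1 i
      have hsplit : hA.eigenvalues i
          = ⟪v, Matrix.toEuclideanLin S v⟫
            + ⟪v, Matrix.toEuclideanLin (vecMulVec u u) v⟫ := by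
        rw [eigenvalue_eq_inner hA i, _root_.map_add, LinearMap.add_apply, inner_add_right]
      have h1 := rayleigh_lower hSH hm_le v
      have h2 := rayleigh_lower hP (fun i => (hPev i).1) v
      have h3 := rayleigh_upper hSH hMs_ge v
      have h4 := rayleigh_upper hP hp_ge v
      rw [hv1] at h1 h2 h3 h4
      constructor
      · rw [hsplit]; linarith
      · rw [hsplit, hMdef]; linarith
    have hbound : ∀ i, |1 - m / M ^ 2 * hA.eigenvalues i| ≤ q := by
      intro i
      obtain ⟨hl, hu2⟩ := hAev i
      have hc0 : (0:ℝ) ≤ m / M ^ 2 := by positivity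
      have hup : m / M ^ 2 * hA.eigenvalues i ≤ m / M := by
        calc m / M ^ 2 * hA.eigenvalues i ≤ m / M ^ 2 * M :=
              mul_le_mul_of_nonneg_left hu2 hc0
          _ = m / M := by field_simp
      have hlo : m ^ 2 / M ^ 2 ≤ m / M ^ 2 * hA.eigenvalues i := by
        calc m ^ 2 / M ^ 2 = m / M ^ 2 * m := by ring
          _ ≤ _ := mul_le_mul_of_nonneg_left hl hc0
      have hmM1 : m / M ≤ 1 := by rw [div_le_one hM_pos]; exact hmM
      have hnn : 0 ≤ 1 - m / M ^ 2 * hA.eigenvalues i := by linarith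
      have h3 : 1 - m ^ 2 / M ^ 2 ≤ t := by
        have hdd : m ^ 2 / (1 + Ms) ^ 2 ≤ m ^ 2 / M ^ 2 := by
          gcongr
        rw [ht]; linarith
      have h4 : t ≤ q := by
        rw [hqdef]
        nlinarith [Real.sq_sqrt ht0, Real.sqrt_nonneg t, sq_nonneg (Real.sqrt t - t)]
      rw [abs_of_nonneg hnn]
      calc 1 - m / M ^ 2 * hA.eigenvalues i ≤ 1 - m ^ 2 / M ^ 2 := by linarith
        _ ≤ t := h3
        _ ≤ q := h4
    rw [hxk]
    exact contraction hA hq0 hbound (x k)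
  refine ⟨fun k => ?_, hq1⟩
  induction k with
  | zero => simp
  | succ k ih =>
    calc ‖x (k + 1)‖ ≤ q * ‖x k‖ := hstep k
      _ ≤ q * (q ^ k * ‖x 0‖) := mul_le_mul_of_nonneg_left ih hq0
      _ = q ^ (k + 1) * ‖x 0‖ := by ring
end

section
/- Let G be a connected simple graph on N vertices with adjacency coefficients a_ij ∈ {0,1}, let μ_i ∈ {0,1} with μ_i = 1 for at least one vertex i, and for each pair i, j let R_ij be a real 2×2 orthogonal matrix satisfying R_ji = (R_ij)ᵀ. Then the 2N×2N matrix L_R̄ + B ⊗ I₂ is positive definite, where L_R̄ is the block matrix with (i,i) block |N_i|·I₂ (|N_i| the degree of i) and (i,j) block −a_ij·R_ij, and B = diag(μ_1,…,μ_N). Equivalently, for every nonzero family x_1,…,x_N ∈ ℝ², (1/2) Σ_i Σ_j a_ij ‖x_i − R_ij x_j‖² + Σ_i μ_i ‖x_i‖² > 0. -/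
open Matrix Finset
open scoped RealInnerProductSpace Kronecker

/-- The attitude Laplacian: the `2N×2N` block matrix whose `(i,i)` diagonal block is
`|Nᵢ|·I₂` (`|Nᵢ|` the degree of `i`) and whose `(i,j)` off-diagonal block is `−aᵢⱼ·Rᵢⱼ`. -/
def attitudeLap (N : ℕ) (G : SimpleGraph (Fin N)) [DecidableRel G.Adj]
    (R : Fin N → Fin N → Matrix (Fin 2) (Fin 2) ℝ) :
    Matrix (Fin N × Fin 2) (Fin N × Fin 2) ℝ :=
  fun pq rs =>
    if pq.1 = rs.1 then (G.degree pq.1 : ℝ) * (if pq.2 = rs.2 then 1 else 0)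
    else -(if G.Adj pq.1 rs.1 then (1 : ℝ) else 0) * R pq.1 rs.1 pq.2 rs.2

lemma degree_eq_sum {N : ℕ} (G : SimpleGraph (Fin N)) [DecidableRel G.Adj] (i : Fin N) :
    (G.degree i : ℝ) = ∑ j, (if G.Adj i j then (1:ℝ) else 0) := by
  rw [Finset.sum_boole]; norm_cast
  rw [SimpleGraph.degree, SimpleGraph.neighborFinset_eq_filter]

lemma orth_sum {R : Matrix (Fin 2) (Fin 2) ℝ} (hR : Rᵀ * R = 1) (v : Fin 2 → ℝ) :
    ∑ p, (R.mulVec v p)^2 = ∑ p, (v p)^2 := by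
  have h : (R *ᵥ v) ⬝ᵥ (R *ᵥ v) = v ⬝ᵥ v := by
    calc (R *ᵥ v) ⬝ᵥ (R *ᵥ v) = (v ᵥ* Rᵀ) ⬝ᵥ (R *ᵥ v) := by rw [Matrix.vecMul_transpose]
    _ = v ⬝ᵥ (Rᵀ *ᵥ (R *ᵥ v)) := (Matrix.dotProduct_mulVec _ _ _).symm
    _ = v ⬝ᵥ ((Rᵀ * R) *ᵥ v) := by rw [Matrix.mulVec_mulVec]
    _ = v ⬝ᵥ v := by rw [hR, Matrix.one_mulVec]
  simpa [dotProduct, sq] using h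

lemma mat_decomp {N : ℕ} (G : SimpleGraph (Fin N)) [DecidableRel G.Adj]
    (μ : Fin N → ℝ) (R : Fin N → Fin N → Matrix (Fin 2) (Fin 2) ℝ) :
    attitudeLap N G R + (Matrix.diagonal μ ⊗ₖ (1 : Matrix (Fin 2) (Fin 2) ℝ))
      = Matrix.diagonal (fun ip : Fin N × Fin 2 => (G.degree ip.1 : ℝ) + μ ip.1)
        + Matrix.of (fun ip jq : Fin N × Fin 2 =>
            -(if G.Adj ip.1 jq.1 then (1:ℝ) else 0) * R ip.1 jq.1 ip.2 jq.2) := by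
  ext ⟨i, p⟩ ⟨j, q⟩
  by_cases h : i = j
  · subst h
    simp [attitudeLap, Matrix.diagonal, Matrix.kroneckerMap_apply, Matrix.one_apply,
      Prod.ext_iff, G.irrefl]
    by_cases hpq : p = q <;> simp [hpq] <;> ring
  · simp [attitudeLap, Matrix.diagonal, Matrix.kroneckerMap_apply, Matrix.one_apply,
      Prod.ext_iff, h]

lemma key_quad {N : ℕ} (G : SimpleGraph (Fin N)) [DecidableRel G.Adj]
    (μ : Fin N → ℝ) (R : Fin N → Fin N → Matrix (Fin 2) (Fin 2) ℝ)
    (hR : ∀ i j, (R i j)ᵀ * R i j = 1)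
    (x : Fin N → Fin 2 → ℝ) :
    (fun ip : Fin N × Fin 2 => x ip.1 ip.2) ⬝ᵥ
      ((attitudeLap N G R + (Matrix.diagonal μ ⊗ₖ (1 : Matrix (Fin 2) (Fin 2) ℝ))) *ᵥ
        fun ip : Fin N × Fin 2 => x ip.1 ip.2)
    = (1/2) * ∑ i, ∑ j, (if G.Adj i j then (1:ℝ) else 0) *
        ∑ p, (x i p - (R i j *ᵥ x j) p)^2
      + ∑ i, μ i * ∑ p, (x i p)^2 := by
  set a : Fin N → Fin N → ℝ := fun i j => if G.Adj i j then (1:ℝ) else 0 with ha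
  set n : Fin N → ℝ := fun i => ∑ p, (x i p)^2 with hn
  set T : Fin N → Fin N → ℝ := fun i j => ∑ p, x i p * (R i j *ᵥ x j) p with hT
  have hLHS : (fun ip : Fin N × Fin 2 => x ip.1 ip.2) ⬝ᵥ
      ((attitudeLap N G R + (Matrix.diagonal μ ⊗ₖ (1 : Matrix (Fin 2) (Fin 2) ℝ))) *ᵥ
        fun ip : Fin N × Fin 2 => x ip.1 ip.2)
      = ∑ i, ((G.degree i : ℝ) + μ i) * n i - ∑ i, ∑ j, a i j * T i j := by
    rw [mat_decomp, Matrix.add_mulVec, dotProduct_add]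
    congr 1
    · simp only [dotProduct, Matrix.mulVec_diagonal, Fintype.sum_prod_type, hn,
        Finset.mul_sum]
      refine Finset.sum_congr rfl fun i _ => Finset.sum_congr rfl fun p _ => by ring
    · simp only [dotProduct, Matrix.mulVec, Fintype.sum_prod_type, hT, ha,
        Finset.mul_sum, ← Finset.sum_neg_distrib]
      refine Finset.sum_congr rfl fun i _ => ?_
      rw [Finset.sum_comm]
      refine Finset.sum_congr rfl fun j _ => Finset.sum_congr rfl fun p _ =>
        Finset.sum_congr rfl fun q _ => ?_
      simp only [Matrix.of_apply]
      ring
  rw [hLHS]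
  have hexp : ∀ i j, ∑ p, (x i p - (R i j *ᵥ x j) p)^2 = n i + n j - 2 * T i j := by
    intro i j
    have horth := orth_sum (hR i j) (x j)
    calc ∑ p, (x i p - (R i j *ᵥ x j) p)^2
        = ∑ p, ((x i p)^2 + ((R i j *ᵥ x j) p)^2 - 2 * (x i p * (R i j *ᵥ x j) p)) :=
          Finset.sum_congr rfl fun p _ => by ring
      _ = n i + n j - 2 * T i j := by
          rw [Finset.sum_sub_distrib, Finset.sum_add_distrib, horth, ← Finset.mul_sum]
  have h1 : ∑ i, ∑ j, a i j * (n i + n j - 2 * T i j)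
      = 2 * ∑ i, (G.degree i : ℝ) * n i - 2 * ∑ i, ∑ j, a i j * T i j := by
    have hs1 : ∑ i, ∑ j, a i j * n i = ∑ i, (G.degree i : ℝ) * n i := by
      refine Finset.sum_congr rfl fun i _ => ?_
      rw [← Finset.sum_mul, ← degree_eq_sum]
    have hs2 : ∑ i, ∑ j, a i j * n j = ∑ i, (G.degree i : ℝ) * n i := by
      rw [Finset.sum_comm]
      refine Finset.sum_congr rfl fun j _ => ?_
      rw [← Finset.sum_mul]
      congr 1
      rw [degree_eq_sum G j]
      refine Finset.sum_congr rfl fun i _ => ?_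
      simp only [ha, SimpleGraph.adj_comm]
    calc ∑ i, ∑ j, a i j * (n i + n j - 2 * T i j)
        = ∑ i, ∑ j, (a i j * n i + a i j * n j - 2 * (a i j * T i j)) := by
          refine Finset.sum_congr rfl fun i _ => Finset.sum_congr rfl fun j _ => by ring
      _ = _ := by
          simp only [Finset.sum_sub_distrib, Finset.sum_add_distrib, ← Finset.mul_sum]
          rw [hs1, hs2]; ring
  calc ∑ i, ((G.degree i : ℝ) + μ i) * n i - ∑ i, ∑ j, a i j * T i j
      = (1/2) * (2 * ∑ i, (G.degree i : ℝ) * n i - 2 * ∑ i, ∑ j, a i j * T i j)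
        + ∑ i, μ i * n i := by
        simp only [add_mul, Finset.sum_add_distrib]; ring
    _ = (1/2) * ∑ i, ∑ j, a i j * ∑ p, (x i p - (R i j *ᵥ x j) p)^2 + ∑ i, μ i * n i := by
        rw [← h1]
        congr 1
        congr 1
        refine Finset.sum_congr rfl fun i _ => Finset.sum_congr rfl fun j _ => by
          rw [hexp]

lemma pos_aux {N : ℕ} (G : SimpleGraph (Fin N)) [DecidableRel G.Adj] (hG : G.Connected)
    (μ : Fin N → ℝ) (hμ : ∀ i, μ i = 0 ∨ μ i = 1) (hone : ∃ i, μ i = 1)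
    (R : Fin N → Fin N → Matrix (Fin 2) (Fin 2) ℝ)
    (hR : ∀ i j, (R i j)ᵀ * R i j = 1)
    (x : Fin N → Fin 2 → ℝ) (hx : x ≠ 0) :
    0 < (1/2) * ∑ i, ∑ j, (if G.Adj i j then (1:ℝ) else 0) *
        ∑ p, (x i p - (R i j *ᵥ x j) p)^2
      + ∑ i, μ i * ∑ p, (x i p)^2 := by
  have hann : ∀ i j : Fin N, 0 ≤ (if G.Adj i j then (1:ℝ) else 0) *
      ∑ p, (x i p - (R i j *ᵥ x j) p)^2 := fun i j =>
    mul_nonneg (by positivity) (Finset.sum_nonneg fun p _ => sq_nonneg _)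
  have hμnn : ∀ i : Fin N, 0 ≤ μ i * ∑ p, (x i p)^2 := fun i =>
    mul_nonneg (by rcases hμ i with h | h <;> rw [h] <;> norm_num)
      (Finset.sum_nonneg fun p _ => sq_nonneg _)
  have hA : 0 ≤ ∑ i, ∑ j, (if G.Adj i j then (1:ℝ) else 0) *
      ∑ p, (x i p - (R i j *ᵥ x j) p)^2 :=
    Finset.sum_nonneg fun i _ => Finset.sum_nonneg fun j _ => hann i j
  have hB : 0 ≤ ∑ i, μ i * ∑ p, (x i p)^2 :=
    Finset.sum_nonneg fun i _ => hμnn i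
  rcases lt_or_eq_of_le (by linarith : (0:ℝ) ≤ (1/2) * ∑ i, ∑ j,
      (if G.Adj i j then (1:ℝ) else 0) * ∑ p, (x i p - (R i j *ᵥ x j) p)^2
      + ∑ i, μ i * ∑ p, (x i p)^2) with hlt | heq
  · exact hlt
  exfalso
  have hA0 : ∑ i, ∑ j, (if G.Adj i j then (1:ℝ) else 0) *
      ∑ p, (x i p - (R i j *ᵥ x j) p)^2 = 0 := by linarith
  have hB0 : ∑ i, μ i * ∑ p, (x i p)^2 = 0 := by linarith
  have hAeach : ∀ i j : Fin N, (if G.Adj i j then (1:ℝ) else 0) *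
      ∑ p, (x i p - (R i j *ᵥ x j) p)^2 = 0 := by
    intro i j
    have h1 := (Finset.sum_eq_zero_iff_of_nonneg
      (fun i _ => Finset.sum_nonneg fun j _ => hann i j)).mp hA0 i (Finset.mem_univ i)
    exact (Finset.sum_eq_zero_iff_of_nonneg (fun j _ => hann i j)).mp h1 j (Finset.mem_univ j)
  have hBeach : ∀ i : Fin N, μ i * ∑ p, (x i p)^2 = 0 :=
    fun i => (Finset.sum_eq_zero_iff_of_nonneg (fun i _ => hμnn i)).mp hB0 i (Finset.mem_univ i)
  -- adjacent vertices: x i = R i j *ᵥ x j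
  have hadj : ∀ i j : Fin N, G.Adj i j → x i = R i j *ᵥ x j := by
    intro i j hij
    have h := hAeach i j
    rw [if_pos hij, one_mul] at h
    funext p
    have := (Finset.sum_eq_zero_iff_of_nonneg (fun p _ => sq_nonneg _)).mp h p (Finset.mem_univ p)
    have := pow_eq_zero_iff (n := 2) (by norm_num) |>.mp this
    linarith [this]
  have hnadj : ∀ i j : Fin N, G.Adj i j → ∑ p, (x i p)^2 = ∑ p, (x j p)^2 := by
    intro i j hij
    rw [hadj i j hij]
    exact orth_sum (hR i j) (x j)
  have hwalk : ∀ {u v : Fin N}, G.Walk u v → ∑ p, (x u p)^2 = ∑ p, (x v p)^2 := by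
    intro u v w
    induction w with
    | nil => rfl
    | cons h _ ih => rw [hnadj _ _ h]; exact ih
  obtain ⟨i₀, hi₀⟩ := hone
  have hn0 : ∑ p, (x i₀ p)^2 = 0 := by
    have := hBeach i₀; rw [hi₀, one_mul] at this; exact this
  have hall : ∀ i, ∑ p, (x i p)^2 = 0 := by
    intro i
    rw [← hwalk ((hG.preconnected i₀ i).some)]
    exact hn0
  apply hx
  funext i p
  have := (Finset.sum_eq_zero_iff_of_nonneg (fun p _ => sq_nonneg _)).mp (hall i) p
    (Finset.mem_univ p)
  have := pow_eq_zero_iff (n := 2) (by norm_num) |>.mp this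
  simpa using this

lemma herm_aux {N : ℕ} (G : SimpleGraph (Fin N)) [DecidableRel G.Adj]
    (μ : Fin N → ℝ) (R : Fin N → Fin N → Matrix (Fin 2) (Fin 2) ℝ)
    (hRsym : ∀ i j, R j i = (R i j)ᵀ) :
    (attitudeLap N G R + (Matrix.diagonal μ ⊗ₖ (1 : Matrix (Fin 2) (Fin 2) ℝ))).IsHermitian := by
  ext ⟨i, p⟩ ⟨j, q⟩
  simp only [Matrix.conjTranspose_apply, Matrix.add_apply, star_trivial,
    Matrix.kroneckerMap_apply, Matrix.diagonal_apply, Matrix.one_apply, attitudeLap]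
  by_cases h : i = j
  · subst h
    simp only [if_pos rfl]
    by_cases hpq : p = q
    · subst hpq; simp
    · simp [hpq, Ne.symm hpq]
  · have h' : ¬ (j = i) := fun hh => h hh.symm
    simp only [if_neg h, if_neg h', Prod.mk.injEq]
    have hr : R j i q p = R i j p q := by rw [hRsym i j]; rfl
    have hadj : (if G.Adj j i then (1:ℝ) else 0) = (if G.Adj i j then (1:ℝ) else 0) := by
      by_cases hb : G.Adj i j
      · rw [if_pos hb, if_pos hb.symm]
      · rw [if_neg hb, if_neg (fun hc => hb hc.symm)]
    rw [hr, hadj]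
    ring

/-- For a connected simple graph, informed coefficients `μ i ∈ {0,1}` with at least one
`μ i = 1`, and 2×2 orthogonal matrices `R i j` with `R j i = (R i j)ᵀ`, the coupled
information matrix `L_R̄ + B ⊗ I₂` is positive definite; equivalently, for every nonzero
family `x₁,…,x_N ∈ ℝ²`, `(1/2) ΣᵢΣⱼ aᵢⱼ ‖xᵢ − Rᵢⱼ xⱼ‖² + Σᵢ μᵢ ‖xᵢ‖² > 0`. -/
theorem attitude_laplacian_posDef (N : ℕ) (G : SimpleGraph (Fin N))
    [DecidableRel G.Adj] (hG : G.Connected)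
    (μ : Fin N → ℝ) (hμ : ∀ i, μ i = 0 ∨ μ i = 1) (hone : ∃ i, μ i = 1)
    (R : Fin N → Fin N → Matrix (Fin 2) (Fin 2) ℝ)
    (hR : ∀ i j, (R i j)ᵀ * R i j = 1)
    (hRsym : ∀ i j, R j i = (R i j)ᵀ) :
    (attitudeLap N G R + (Matrix.diagonal μ ⊗ₖ (1 : Matrix (Fin 2) (Fin 2) ℝ))).PosDef ∧
    ∀ x : Fin N → EuclideanSpace ℝ (Fin 2), x ≠ 0 →
      0 < (1 / 2) * ∑ i, ∑ j, (if G.Adj i j then (1 : ℝ) else 0) *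
            ‖x i - Matrix.toEuclideanLin (R i j) (x j)‖ ^ 2
          + ∑ i, μ i * ‖x i‖ ^ 2 := by
  have hsq : ∀ v : EuclideanSpace ℝ (Fin 2), ‖v‖^2 = ∑ p, (v p)^2 := by
    intro v
    rw [EuclideanSpace.norm_eq, Real.sq_sqrt (by positivity)]
    simp [sq_abs]
  constructor
  · refine Matrix.PosDef.of_dotProduct_mulVec_pos (herm_aux G μ R hRsym) fun y hy => ?_
    have hy' : (fun i p => y (i, p)) ≠ 0 := by
      intro h
      apply hy
      funext ip
      have := congrFun (congrFun h ip.1) ip.2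
      simpa using this
    have hk := key_quad G μ R hR (fun i p => y (i, p))
    have hfun : (fun ip : Fin N × Fin 2 => y (ip.1, ip.2)) = y := by
      funext ⟨i, p⟩; rfl
    simp only [hfun] at hk
    have hstar : star y = y := by funext ip; simp
    rw [hstar, hk]
    exact pos_aux G hG μ hμ hone R hR _ hy'
  · intro x hx
    have hx' : (fun i p => x i p) ≠ 0 := by
      intro h
      apply hx
      funext i
      ext p
      have := congrFun (congrFun h i) p
      simpa using this
    have hpos := pos_aux G hG μ hμ hone R hR (fun i p => x i p) hx'
    have hterm : ∀ i j : Fin N, ‖x i - Matrix.toEuclideanLin (R i j) (x j)‖ ^ 2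
        = ∑ p, (x i p - (R i j *ᵥ fun p => x j p) p)^2 := by
      intro i j
      rw [hsq]
      refine Finset.sum_congr rfl fun p _ => ?_
      congr 1
    have hterm2 : ∀ i : Fin N, ‖x i‖ ^ 2 = ∑ p, ((fun p => x i p) p)^2 := fun i => hsq (x i)
    simpa only [hterm, hterm2] using hpos
end

section
/- Let M be a real symmetric positive definite n×n matrix, let a₁, a₂ ≥ 0, α > 0, C ≥ 0, and let g : ℝ → ℝⁿ. Suppose x : ℝ → ℝⁿ is differentiable and satisfies x'(t) = −M x(t) + g(t) for all t ≥ 0, where ‖g(t)‖ ≤ (a₁‖x(t)‖ + a₂)·C·e^{−αt} for all t ≥ 0. Then x(t) → 0 as t → ∞. -/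
open Matrix

lemma coercive_aux (n : ℕ) (M : Matrix (Fin n) (Fin n) ℝ) (hM : M.PosDef) :
    ∃ μ : ℝ, 0 < μ ∧ ∀ v : EuclideanSpace ℝ (Fin n),
      μ * ‖v‖ ^ 2 ≤ inner ℝ (Matrix.toEuclideanLin M v) v := by
  have hdot : ∀ v : EuclideanSpace ℝ (Fin n),
      (inner ℝ (Matrix.toEuclideanLin M v) v : ℝ) = (v : Fin n → ℝ) ⬝ᵥ M.mulVec v := by
    intro v
    simp [Matrix.toEuclideanLin, inner, dotProduct, Matrix.mulVec, mul_comm]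
  have hpos : ∀ v : EuclideanSpace ℝ (Fin n), v ≠ 0 →
      (0:ℝ) < inner ℝ (Matrix.toEuclideanLin M v) v := by
    intro v hv
    rw [hdot]
    exact hM.re_dotProduct_pos (x := v.ofLp) (by simpa using hv)
  rcases subsingleton_or_nontrivial (EuclideanSpace ℝ (Fin n)) with h | h
  · refine ⟨1, one_pos, fun v => ?_⟩
    have : v = 0 := Subsingleton.elim v 0
    simp [this]
  · set f : EuclideanSpace ℝ (Fin n) → ℝ :=
      fun v => inner ℝ (Matrix.toEuclideanLin M v) v with hf
    have hcont : Continuous f := by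
      have hA : Continuous (fun v : EuclideanSpace ℝ (Fin n) => Matrix.toEuclideanLin M v) :=
        LinearMap.continuous_of_finiteDimensional _
      exact hA.inner continuous_id
    obtain ⟨v₀, hv₀s, hv₀min⟩ :=
      (isCompact_sphere (0 : EuclideanSpace ℝ (Fin n)) 1).exists_isMinOn
        (NormedSpace.sphere_nonempty.mpr zero_le_one) hcont.continuousOn
    have hv₀norm : ‖v₀‖ = 1 := by simpa using hv₀s
    have hv₀ne : v₀ ≠ 0 := by
      intro h0; rw [h0] at hv₀norm; simp at hv₀norm
    refine ⟨f v₀, hpos v₀ hv₀ne, fun v => ?_⟩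
    rcases eq_or_ne v 0 with rfl | hv
    · simp
    · have hnv : (0:ℝ) < ‖v‖ := norm_pos_iff.mpr hv
      set w : EuclideanSpace ℝ (Fin n) := ‖v‖⁻¹ • v with hw
      have hws : w ∈ Metric.sphere (0 : EuclideanSpace ℝ (Fin n)) 1 := by
        simp [hw, norm_smul, abs_of_pos (inv_pos.mpr hnv), inv_mul_cancel₀ hnv.ne']
      have hfw : f v₀ ≤ f w := hv₀min hws
      have hfw_eq : f w = ‖v‖⁻¹ ^ 2 * f v := by
        simp only [hf, hw, LinearMap.map_smul, real_inner_smul_left, real_inner_smul_right,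
          smul_eq_mul]
        ring
      rw [hfw_eq] at hfw
      calc f v₀ * ‖v‖ ^ 2 ≤ (‖v‖⁻¹ ^ 2 * f v) * ‖v‖ ^ 2 :=
            mul_le_mul_of_nonneg_right hfw (sq_nonneg _)
        _ = f v := by field_simp

/-- Vanishing perturbation with state-dependent bound: if `M` is symmetric positive
definite, `x'(t) = −M x(t) + g(t)` for all `t ≥ 0` with
`‖g(t)‖ ≤ (a₁‖x(t)‖ + a₂)·C·e^{−αt}`, then `x(t) → 0` as `t → ∞`. -/
theorem perturbed_system_state_dependent_tendsto_zero (n : ℕ)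
    (M : Matrix (Fin n) (Fin n) ℝ) (hM : M.PosDef)
    (a₁ a₂ α C : ℝ) (ha₁ : 0 ≤ a₁) (ha₂ : 0 ≤ a₂) (hα : 0 < α) (hC : 0 ≤ C)
    (g : ℝ → EuclideanSpace ℝ (Fin n))
    (x : ℝ → EuclideanSpace ℝ (Fin n))
    (hx : Differentiable ℝ x)
    (hode : ∀ t : ℝ, 0 ≤ t →
      deriv x t = -(Matrix.toEuclideanLin M (x t)) + g t)
    (hg : ∀ t : ℝ, 0 ≤ t →
      ‖g t‖ ≤ (a₁ * ‖x t‖ + a₂) * C * Real.exp (-α * t)) :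
    Filter.Tendsto x Filter.atTop (nhds 0) := by
  obtain ⟨μ, hμ, hcoer⟩ := coercive_aux n M hM
  set c : ℝ := (2 * a₁ + a₂) * C with hc
  set d : ℝ := a₂ * C with hd
  have hc0 : 0 ≤ c := by positivity
  have hd0 : 0 ≤ d := by positivity
  set β : ℝ := min (2 * μ) (α / 2) with hβ
  have hβ0 : 0 < β := lt_min (by linarith) (by linarith)
  have hβα : β < α := lt_of_le_of_lt (min_le_right _ _) (by linarith)
  have hβμ : β ≤ 2 * μ := min_le_left _ _
  have hαβne : α - β ≠ 0 := sub_ne_zero.mpr hβα.ne'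
  set u : ℝ → ℝ := fun t => ‖x t‖ ^ 2 with hu
  have hu0 : ∀ t, 0 ≤ u t := fun t => sq_nonneg _
  have huderiv : ∀ t, HasDerivAt u (2 * inner ℝ (deriv x t) (x t)) t := by
    intro t
    have h := HasDerivAt.inner ℝ (hx t).hasDerivAt (hx t).hasDerivAt
    have h2 : (inner ℝ (x t) (deriv x t) : ℝ) + inner ℝ (deriv x t) (x t)
        = 2 * inner ℝ (deriv x t) (x t) := by
      rw [real_inner_comm]; ring
    rw [h2] at h
    simpa only [real_inner_self_eq_norm_sq] using h
  have hkey : ∀ t : ℝ, 0 ≤ t →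
      deriv u t ≤ -β * u t + c * Real.exp (-α * t) * u t + d * Real.exp (-α * t) := by
    intro t ht
    rw [(huderiv t).deriv, hode t ht]
    have hA : μ * ‖x t‖ ^ 2 ≤ inner ℝ (Matrix.toEuclideanLin M (x t)) (x t) := hcoer (x t)
    have hN : 0 ≤ ‖x t‖ := norm_nonneg _
    have he : (0:ℝ) < Real.exp (-α * t) := Real.exp_pos _
    have hgb2 : (inner ℝ (g t) (x t) : ℝ)
        ≤ (a₁ * ‖x t‖ + a₂) * C * Real.exp (-α * t) * ‖x t‖ := by
      calc (inner ℝ (g t) (x t) : ℝ) ≤ ‖g t‖ * ‖x t‖ := real_inner_le_norm _ _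
        _ ≤ _ := mul_le_mul_of_nonneg_right (hg t ht) hN
    have hsplit : (inner ℝ (-(Matrix.toEuclideanLin M (x t)) + g t) (x t) : ℝ)
        = -(inner ℝ (Matrix.toEuclideanLin M (x t)) (x t)) + inner ℝ (g t) (x t) := by
      rw [inner_add_left, inner_neg_left]
    rw [hsplit]
    have hut : u t = ‖x t‖ ^ 2 := rfl
    have h1 : 0 ≤ (a₂ * C * Real.exp (-α * t)) * (‖x t‖ - 1) ^ 2 :=
      mul_nonneg (by positivity) (sq_nonneg _)
    have h2 : 0 ≤ (2 * μ - β) * ‖x t‖ ^ 2 := mul_nonneg (by linarith) (sq_nonneg _)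
    rw [hut, hc, hd]
    nlinarith [hA, hgb2, h1, h2]
  set K : ℝ := d * Real.exp (c / α) / (α - β) with hK
  have hK0 : 0 ≤ K := div_nonneg (mul_nonneg hd0 (Real.exp_pos _).le) (by linarith)
  set p : ℝ → ℝ := fun t => β * t + c / α * Real.exp (-α * t) with hp
  set φ : ℝ → ℝ := fun t => Real.exp (p t) * u t + K * Real.exp ((β - α) * t) with hφ
  have hpderiv : ∀ t, HasDerivAt p (β - c * Real.exp (-α * t)) t := by
    intro t
    have h1 : HasDerivAt (fun s : ℝ => β * s) β t := by
      simpa using (hasDerivAt_id t).const_mul β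
    have h2 : HasDerivAt (fun s : ℝ => -α * s) (-α) t := by
      simpa using (hasDerivAt_id t).const_mul (-α)
    have h3 : HasDerivAt (fun s : ℝ => c / α * Real.exp (-α * s))
        (c / α * (Real.exp (-α * t) * -α)) t := (h2.exp).const_mul (c / α)
    have h4 := h1.add h3
    have heq : β + c / α * (Real.exp (-α * t) * -α) = β - c * Real.exp (-α * t) := by
      field_simp; ring
    rw [heq] at h4
    exact h4
  have hφderiv : ∀ t, HasDerivAt φ
      (Real.exp (p t) * (β - c * Real.exp (-α * t)) * u t
        + Real.exp (p t) * deriv u t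
        + K * (Real.exp ((β - α) * t) * (β - α))) t := by
    intro t
    have h1 := (hpderiv t).exp
    have h2 := h1.mul (huderiv t)
    have h3 : HasDerivAt (fun s : ℝ => Real.exp ((β - α) * s))
        (Real.exp ((β - α) * t) * (β - α)) t := by
      have := ((hasDerivAt_id t).const_mul (β - α)).exp
      simpa using this
    rw [← (huderiv t).deriv] at h2
    exact h2.add (h3.const_mul K)
  have hφdiff : Differentiable ℝ φ := fun t => (hφderiv t).differentiableAt
  have hφ'le : ∀ t ∈ interior (Set.Ici (0:ℝ)), deriv φ t ≤ 0 := by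
    rw [interior_Ici]
    intro t ht
    rw [(hφderiv t).deriv]
    have hu'le := hkey t ht.le
    have hEp : Real.exp (p t) ≤ Real.exp (β * t) * Real.exp (c / α) := by
      rw [← Real.exp_add]
      apply Real.exp_le_exp.mpr
      have htpos : (0:ℝ) < t := ht
      have he1 : Real.exp (-α * t) ≤ 1 := Real.exp_le_one_iff.mpr
        (by nlinarith [mul_pos hα htpos])
      have : c / α * Real.exp (-α * t) ≤ c / α * 1 :=
        mul_le_mul_of_nonneg_left he1 (div_nonneg hc0 hα.le)
      simp only [hp]; linarith
    have h1 : Real.exp (p t) * (β - c * Real.exp (-α * t)) * u t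
        + Real.exp (p t) * deriv u t ≤ Real.exp (p t) * (d * Real.exp (-α * t)) := by
      have hstep : (β - c * Real.exp (-α * t)) * u t + deriv u t
          ≤ d * Real.exp (-α * t) := by nlinarith [hu'le]
      calc Real.exp (p t) * (β - c * Real.exp (-α * t)) * u t
            + Real.exp (p t) * deriv u t
          = Real.exp (p t) * ((β - c * Real.exp (-α * t)) * u t + deriv u t) := by ring
        _ ≤ _ := mul_le_mul_of_nonneg_left hstep (Real.exp_pos _).le
    have h2 : Real.exp (p t) * (d * Real.exp (-α * t))
        ≤ d * Real.exp (c / α) * Real.exp ((β - α) * t) := by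
      have hdE : 0 ≤ d * Real.exp (-α * t) := mul_nonneg hd0 (Real.exp_pos _).le
      calc Real.exp (p t) * (d * Real.exp (-α * t))
          ≤ (Real.exp (β * t) * Real.exp (c / α)) * (d * Real.exp (-α * t)) :=
            mul_le_mul_of_nonneg_right hEp hdE
        _ = d * Real.exp (c / α) * (Real.exp (β * t) * Real.exp (-α * t)) := by ring
        _ = d * Real.exp (c / α) * Real.exp ((β - α) * t) := by
            rw [← Real.exp_add]; ring_nf
    have h3 : K * (Real.exp ((β - α) * t) * (β - α))
        = -(d * Real.exp (c / α) * Real.exp ((β - α) * t)) := by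
      rw [hK]; field_simp; ring
    linarith
  have hmono : AntitoneOn φ (Set.Ici 0) :=
    antitoneOn_of_deriv_nonpos (convex_Ici 0) hφdiff.continuous.continuousOn
      hφdiff.differentiableOn hφ'le
  have hub : ∀ t : ℝ, 0 ≤ t → u t ≤ φ 0 * Real.exp (-β * t) := by
    intro t ht
    have h1 : φ t ≤ φ 0 := hmono Set.self_mem_Ici ht ht
    have h2 : Real.exp (β * t) * u t ≤ φ t := by
      have e1 : Real.exp (β * t) ≤ Real.exp (p t) := by
        apply Real.exp_le_exp.mpr
        have : 0 ≤ c / α * Real.exp (-α * t) := by positivity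
        simp only [hp]; linarith
      have e2 : 0 ≤ K * Real.exp ((β - α) * t) := mul_nonneg hK0 (Real.exp_pos _).le
      have e3 := mul_le_mul_of_nonneg_right e1 (hu0 t)
      simp only [hφ]; linarith
    have h3 : Real.exp (β * t) * u t ≤ φ 0 := le_trans h2 h1
    have h4 := mul_le_mul_of_nonneg_left h3 (Real.exp_pos (-β * t)).le
    have h5 : Real.exp (-β * t) * Real.exp (β * t) = 1 := by
      rw [← Real.exp_add]; simp
    calc u t = Real.exp (-β * t) * Real.exp (β * t) * u t := by rw [h5]; ring
      _ = Real.exp (-β * t) * (Real.exp (β * t) * u t) := by ring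
      _ ≤ Real.exp (-β * t) * φ 0 := h4
      _ = φ 0 * Real.exp (-β * t) := by ring
  have hulim : Filter.Tendsto u Filter.atTop (nhds 0) := by
    apply squeeze_zero' (Filter.Eventually.of_forall hu0)
      ((Filter.eventually_ge_atTop 0).mono (fun t ht => hub t ht))
    have hexp : Filter.Tendsto (fun t : ℝ => Real.exp (-β * t)) Filter.atTop (nhds 0) := by
      apply Real.tendsto_exp_comp_nhds_zero.mpr
      exact (Filter.tendsto_const_mul_atBot_of_neg (by linarith : -β < 0)).mpr Filter.tendsto_id
    simpa using hexp.const_mul (φ 0)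
  have hnorm : Filter.Tendsto (fun t => ‖x t‖) Filter.atTop (nhds 0) := by
    have hsq := (Real.continuous_sqrt.tendsto 0).comp hulim
    rw [Real.sqrt_zero] at hsq
    have heq : (fun t => ‖x t‖) = fun t => Real.sqrt (u t) :=
      funext fun t => (Real.sqrt_sq (norm_nonneg _)).symm
    rw [heq]
    exact hsq
  exact tendsto_zero_iff_norm_tendsto_zero.mpr hnorm
end

section
/- Let G be a connected simple graph on N vertices with real Laplacian matrix L, let B = diag(μ_1,…,μ_N) with μ_i ∈ {0,1} and μ_i = 1 for at least one i, let α > 0, C ≥ 0, and let Ξ : ℝ → ℝ^{3N} satisfy ‖Ξ(t)‖ ≤ C·e^{−αt} for all t ≥ 0. Suppose p̃ : ℝ → ℝ^{3N} is differentiable and satisfies p̃'(t) = −((L + B) ⊗ I₃) p̃(t) + Ξ(t) for all t ≥ 0, where ⊗ denotes the Kronecker product and I₃ the 3×3 identity matrix. Then p̃(t) → 0 as t → ∞. -/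
open Matrix
open scoped Kronecker

set_option maxHeartbeats 1000000

open scoped RealInnerProductSpace

lemma aux_kron_inner (N : ℕ) (M : Matrix (Fin N) (Fin N) ℝ)
    (x : EuclideanSpace ℝ (Fin N × Fin 3)) :
    ⟪x, Matrix.toEuclideanLin (M ⊗ₖ (1 : Matrix (Fin 3) (Fin 3) ℝ)) x⟫ =
      ∑ a : Fin 3, (fun i => x (i, a)) ⬝ᵥ M *ᵥ (fun i => x (i, a)) := by
  simp only [PiLp.inner_apply, toEuclideanLin_apply, mulVec,
    dotProduct, kroneckerMap_apply, Matrix.one_apply, RCLike.inner_apply', conj_trivial,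
    Fintype.sum_prod_type]
  rw [Finset.sum_comm]
  refine Finset.sum_congr rfl fun a _ => Finset.sum_congr rfl fun i _ => ?_
  congr 1
  refine Finset.sum_congr rfl fun j _ => ?_
  simp [ite_mul, Finset.sum_ite_eq]

lemma aux_quad_nonneg (N : ℕ) (G : SimpleGraph (Fin N)) [DecidableRel G.Adj]
    (μ : Fin N → ℝ) (hμ : ∀ i, 0 ≤ μ i) (y : Fin N → ℝ) :
    0 ≤ y ⬝ᵥ (G.lapMatrix ℝ + Matrix.diagonal μ) *ᵥ y := by
  rw [add_mulVec, dotProduct_add]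
  have hL : 0 ≤ y ⬝ᵥ (G.lapMatrix ℝ) *ᵥ y := by
    have := (SimpleGraph.posSemidef_lapMatrix ℝ G).dotProduct_mulVec_nonneg y
    simpa using this
  have hD : 0 ≤ y ⬝ᵥ (Matrix.diagonal μ) *ᵥ y := by
    simp only [dotProduct, mulVec_diagonal]
    exact Finset.sum_nonneg fun i _ => by nlinarith [hμ i, sq_nonneg (y i)]
  linarith

lemma aux_quad_pos (N : ℕ) (G : SimpleGraph (Fin N)) [DecidableRel G.Adj] (hG : G.Connected)
    (μ : Fin N → ℝ) (hμ : ∀ i, 0 ≤ μ i) (hone : ∃ i, μ i = 1)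
    (y : Fin N → ℝ) (hy : y ≠ 0) :
    0 < y ⬝ᵥ (G.lapMatrix ℝ + Matrix.diagonal μ) *ᵥ y := by
  rw [add_mulVec, dotProduct_add]
  have hL : 0 ≤ y ⬝ᵥ (G.lapMatrix ℝ) *ᵥ y := by
    have := (SimpleGraph.posSemidef_lapMatrix ℝ G).dotProduct_mulVec_nonneg y
    simpa using this
  have hDeq : y ⬝ᵥ (Matrix.diagonal μ) *ᵥ y = ∑ i, μ i * y i ^ 2 := by
    simp only [dotProduct, mulVec_diagonal]
    exact Finset.sum_congr rfl fun i _ => by ring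
  have hD : 0 ≤ y ⬝ᵥ (Matrix.diagonal μ) *ᵥ y := by
    rw [hDeq]
    exact Finset.sum_nonneg fun i _ => mul_nonneg (hμ i) (sq_nonneg _)
  rcases lt_or_eq_of_le hL with h | h
  · linarith
  rcases lt_or_eq_of_le hD with h2 | h2
  · linarith
  exfalso
  have hconst : ∀ i j, y i = y j := by
    have : Matrix.toLinearMap₂' ℝ (G.lapMatrix ℝ) y y = 0 := by
      rw [Matrix.toLinearMap₂'_apply']; exact h.symm
    rw [G.lapMatrix_toLinearMap₂'_apply'_eq_zero_iff_forall_reachable] at this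
    exact fun i j => this i j (hG.preconnected i j)
  obtain ⟨i₀, hi₀⟩ := hone
  have hsum : ∑ i, μ i * y i ^ 2 = 0 := by rw [← hDeq]; exact h2.symm
  have hzero : ∀ i ∈ Finset.univ, μ i * y i ^ 2 = 0 :=
    (Finset.sum_eq_zero_iff_of_nonneg
      (fun i _ => mul_nonneg (hμ i) (sq_nonneg _))).mp hsum
  have hy0 : y i₀ = 0 := by
    have := hzero i₀ (Finset.mem_univ _)
    rw [hi₀, one_mul] at this
    exact pow_eq_zero_iff (by norm_num) |>.mp this
  exact hy (funext fun j => by rw [Pi.zero_apply, hconst j i₀, hy0])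

lemma aux_coercive {E : Type*} [NormedAddCommGroup E] [InnerProductSpace ℝ E]
    [FiniteDimensional ℝ E] [Nontrivial E] (T : E →ₗ[ℝ] E)
    (hpos : ∀ x : E, x ≠ 0 → 0 < ⟪x, T x⟫) :
    ∃ lam > 0, ∀ x : E, lam * ‖x‖ ^ 2 ≤ ⟪x, T x⟫ := by
  have hTc : Continuous T := T.continuous_of_finiteDimensional
  have hf : Continuous fun x : E => ⟪x, T x⟫ := continuous_id.inner hTc
  have hsph : (Metric.sphere (0 : E) 1).Nonempty :=
    NormedSpace.sphere_nonempty.mpr zero_le_one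
  obtain ⟨x₀, hx₀mem, hx₀min⟩ :=
    (isCompact_sphere (0 : E) 1).exists_isMinOn hsph hf.continuousOn
  have hx₀norm : ‖x₀‖ = 1 := by simpa using hx₀mem
  have hx₀ne : x₀ ≠ 0 := by intro h; rw [h] at hx₀norm; simp at hx₀norm
  refine ⟨⟪x₀, T x₀⟫, hpos x₀ hx₀ne, fun x => ?_⟩
  rcases eq_or_ne x 0 with rfl | hx
  · simp
  · set u : E := ‖x‖⁻¹ • x with hu
    have hnx : (0:ℝ) < ‖x‖ := norm_pos_iff.mpr hx
    have humem : u ∈ Metric.sphere (0 : E) 1 := by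
      simp [hu, norm_smul, abs_of_pos (inv_pos.mpr hnx), inv_mul_cancel₀ hnx.ne']
    have hmin := hx₀min humem
    have hscale : ⟪u, T u⟫ = ‖x‖⁻¹ ^ 2 * ⟪x, T x⟫ := by
      rw [hu, T.map_smul, real_inner_smul_left, real_inner_smul_right]
      ring
    have hmin' : ⟪x₀, T x₀⟫ ≤ ‖x‖⁻¹ ^ 2 * ⟪x, T x⟫ := hscale ▸ hmin
    have h2 : ⟪x₀, T x₀⟫ * ‖x‖ ^ 2 ≤ ‖x‖⁻¹ ^ 2 * ⟪x, T x⟫ * ‖x‖ ^ 2 :=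
      mul_le_mul_of_nonneg_right hmin' (sq_nonneg _)
    calc ⟪x₀, T x₀⟫ * ‖x‖ ^ 2 ≤ ‖x‖⁻¹ ^ 2 * ⟪x, T x⟫ * ‖x‖ ^ 2 := h2
      _ = ⟪x, T x⟫ := by field_simp

/-- Position part of the distributed coupled estimator: for a connected simple graph with
Laplacian `L`, informed matrix `B = diag(μ₁,…,μ_N)` with `μ i ∈ {0,1}` and some `μ i = 1`,
and an exponentially decaying perturbation `Ξ`, any differentiable solution of
`p̃'(t) = −((L + B) ⊗ I₃) p̃(t) + Ξ(t)` on `t ≥ 0` converges to `0`. -/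
theorem position_estimator_convergence (N : ℕ)
    (G : SimpleGraph (Fin N)) [DecidableRel G.Adj] (hG : G.Connected)
    (μ : Fin N → ℝ) (hμ : ∀ i, μ i = 0 ∨ μ i = 1) (hone : ∃ i, μ i = 1)
    (α C : ℝ) (hα : 0 < α) (hC : 0 ≤ C)
    (Ξ : ℝ → EuclideanSpace ℝ (Fin N × Fin 3))
    (hΞ : ∀ t : ℝ, 0 ≤ t → ‖Ξ t‖ ≤ C * Real.exp (-α * t))
    (p : ℝ → EuclideanSpace ℝ (Fin N × Fin 3))
    (hp : Differentiable ℝ p)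
    (hode : ∀ t : ℝ, 0 ≤ t →
      deriv p t =
        -(Matrix.toEuclideanLin
            ((G.lapMatrix ℝ + Matrix.diagonal μ) ⊗ₖ (1 : Matrix (Fin 3) (Fin 3) ℝ))
            (p t)) + Ξ t) :
    Filter.Tendsto p Filter.atTop (nhds 0) := by
  classical
  haveI : Nonempty (Fin N) := hG.nonempty
  obtain ⟨i₀, hi₀⟩ := hone
  haveI : Nontrivial (EuclideanSpace ℝ (Fin N × Fin 3)) := by
    refine ⟨0, EuclideanSpace.single (i₀, (0 : Fin 3)) 1, fun h => ?_⟩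
    have := congrArg (fun v : EuclideanSpace ℝ (Fin N × Fin 3) => v (i₀, (0 : Fin 3))) h
    simp [EuclideanSpace.single_apply] at this
  have hμ' : ∀ i, 0 ≤ μ i := fun i => by rcases hμ i with h | h <;> rw [h] <;> norm_num
  set M : Matrix (Fin N) (Fin N) ℝ := G.lapMatrix ℝ + Matrix.diagonal μ with hM
  set T : EuclideanSpace ℝ (Fin N × Fin 3) →ₗ[ℝ] EuclideanSpace ℝ (Fin N × Fin 3) :=
    Matrix.toEuclideanLin (M ⊗ₖ (1 : Matrix (Fin 3) (Fin 3) ℝ)) with hT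
  have hpos : ∀ x : EuclideanSpace ℝ (Fin N × Fin 3), x ≠ 0 → 0 < ⟪x, T x⟫ := by
    intro x hx
    rw [hT, aux_kron_inner]
    have hxq : ∃ q : Fin N × Fin 3, x q ≠ 0 := by
      by_contra h
      push_neg at h
      exact hx (PiLp.ext h)
    obtain ⟨⟨i, a⟩, hq⟩ := hxq
    refine Finset.sum_pos' (fun b _ => aux_quad_nonneg N G μ hμ' _) ⟨a, Finset.mem_univ _, ?_⟩
    refine aux_quad_pos N G hG μ hμ' ⟨i₀, hi₀⟩ _ (fun h => hq ?_)
    exact congrFun h i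
  obtain ⟨lam, hlam, hco⟩ := aux_coercive T hpos
  -- Lyapunov function g = ‖p‖²  (as inner product)
  set g : ℝ → ℝ := fun t => ⟪p t, p t⟫ with hg
  have hgnorm : ∀ t, g t = ‖p t‖ ^ 2 := fun t => real_inner_self_eq_norm_sq _
  have hgderiv : ∀ t, HasDerivAt g (2 * ⟪p t, deriv p t⟫) t := by
    intro t
    have h1 := HasDerivAt.inner ℝ (hp t).hasDerivAt (hp t).hasDerivAt
    refine h1.congr_deriv ?_
    rw [real_inner_comm (deriv p t) (p t)]
    ring
  set β : ℝ := min (lam / 2) α with hβ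
  have hβpos : 0 < β := lt_min (by linarith) hα
  have hβlam : β < lam := lt_of_le_of_lt (min_le_left _ _) (by linarith)
  have hβα : β ≤ 2 * α := le_trans (min_le_right _ _) (by linarith)
  set D : ℝ := lam⁻¹ * C ^ 2 with hD
  have hDnn : 0 ≤ D := mul_nonneg (inv_nonneg.mpr hlam.le) (sq_nonneg _)
  -- differential inequality for g on t ≥ 0
  have hkey : ∀ t : ℝ, 0 ≤ t →
      2 * ⟪p t, deriv p t⟫ ≤ -lam * g t + D * Real.exp (-β * t) := by
    intro t ht
    rw [hode t ht]
    have hsplit : ⟪p t, -(T (p t)) + Ξ t⟫ = -⟪p t, T (p t)⟫ + ⟪p t, Ξ t⟫ := by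
      rw [inner_add_right, inner_neg_right]
    have hco' : lam * ‖p t‖ ^ 2 ≤ ⟪p t, T (p t)⟫ := hco (p t)
    have hPΞ : ⟪p t, Ξ t⟫ ≤ ‖p t‖ * ‖Ξ t‖ := real_inner_le_norm _ _
    have hΞt : ‖Ξ t‖ ≤ C * Real.exp (-α * t) := hΞ t ht
    have hΞnn : 0 ≤ ‖Ξ t‖ := norm_nonneg _
    have hΞsq : ‖Ξ t‖ ^ 2 ≤ C ^ 2 * Real.exp (-α * t) ^ 2 := by nlinarith
    have hexpsq : Real.exp (-α * t) ^ 2 = Real.exp (-(2 * α) * t) := by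
      rw [← Real.exp_nat_mul]; ring_nf
    have hexple : Real.exp (-(2 * α) * t) ≤ Real.exp (-β * t) := by
      apply Real.exp_le_exp.mpr
      nlinarith
    have hyoung : 2 * (‖p t‖ * ‖Ξ t‖) ≤ lam * ‖p t‖ ^ 2 + lam⁻¹ * ‖Ξ t‖ ^ 2 := by
      have hinv : lam⁻¹ * lam = 1 := inv_mul_cancel₀ hlam.ne'
      nlinarith [sq_nonneg (lam * ‖p t‖ - ‖Ξ t‖), mul_pos hlam hlam]
    have hgt : g t = ‖p t‖ ^ 2 := hgnorm t
    rw [hsplit, hgt]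
    have hinv2 : lam⁻¹ * ‖Ξ t‖ ^ 2 ≤ D * Real.exp (-β * t) := by
      rw [hD]
      have h1 : ‖Ξ t‖ ^ 2 ≤ C ^ 2 * Real.exp (-β * t) := by
        calc ‖Ξ t‖ ^ 2 ≤ C ^ 2 * Real.exp (-α * t) ^ 2 := hΞsq
          _ = C ^ 2 * Real.exp (-(2 * α) * t) := by rw [hexpsq]
          _ ≤ C ^ 2 * Real.exp (-β * t) := by nlinarith [sq_nonneg C]
      calc lam⁻¹ * ‖Ξ t‖ ^ 2 ≤ lam⁻¹ * (C ^ 2 * Real.exp (-β * t)) :=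
            mul_le_mul_of_nonneg_left h1 (inv_nonneg.mpr hlam.le)
        _ = lam⁻¹ * C ^ 2 * Real.exp (-β * t) := by ring
    nlinarith
  -- auxiliary decreasing function
  set K : ℝ := D / (lam - β) with hK
  set h : ℝ → ℝ := fun t => g t * Real.exp (lam * t) - K * Real.exp ((lam - β) * t) with hh
  have hexpd : ∀ (c t : ℝ), HasDerivAt (fun s => Real.exp (c * s)) (Real.exp (c * t) * c) t :=
    fun c t => by simpa using ((hasDerivAt_id t).const_mul c).exp
  have hhderiv : ∀ t, HasDerivAt h
      (2 * ⟪p t, deriv p t⟫ * Real.exp (lam * t) + g t * (Real.exp (lam * t) * lam)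
        - K * (Real.exp ((lam - β) * t) * (lam - β))) t := by
    intro t
    exact ((hgderiv t).mul (hexpd lam t)).sub ((hexpd (lam - β) t).const_mul K)
  have hdiffh : Differentiable ℝ h := fun t => (hhderiv t).differentiableAt
  have hanti : AntitoneOn h (Set.Ici (0:ℝ)) := by
    apply antitoneOn_of_deriv_nonpos (convex_Ici 0) hdiffh.continuous.continuousOn
      hdiffh.differentiableOn
    intro t htmem
    rw [interior_Ici] at htmem
    have ht : (0:ℝ) ≤ t := le_of_lt htmem
    rw [(hhderiv t).deriv]
    have hKD : K * (lam - β) = D := by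
      rw [hK]; exact div_mul_cancel₀ D (by linarith)
    have hexp_mul : Real.exp (-β * t) * Real.exp (lam * t) = Real.exp ((lam - β) * t) := by
      rw [← Real.exp_add]; ring_nf
    have := hkey t ht
    have hep : 0 < Real.exp (lam * t) := Real.exp_pos _
    nlinarith [Real.exp_pos ((lam - β) * t)]
  -- decay bound for g
  have hbound : ∀ t : ℝ, 0 ≤ t →
      g t ≤ h 0 * Real.exp (-(lam * t)) + K * Real.exp (-(β * t)) := by
    intro t ht
    have hht := hanti (Set.self_mem_Ici) ht ht
    have e1 : Real.exp (lam * t) * Real.exp (-(lam * t)) = 1 := by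
      rw [← Real.exp_add]; simp
    have e2 : Real.exp ((lam - β) * t) * Real.exp (-(lam * t)) = Real.exp (-(β * t)) := by
      rw [← Real.exp_add]; ring_nf
    have hep : 0 < Real.exp (-(lam * t)) := Real.exp_pos _
    have hteq : h t = g t * Real.exp (lam * t) - K * Real.exp ((lam - β) * t) := rfl
    have hht' : g t * Real.exp (lam * t) ≤ h 0 + K * Real.exp ((lam - β) * t) := by
      linarith [hht, hteq]
    calc g t = g t * (Real.exp (lam * t) * Real.exp (-(lam * t))) := by rw [e1]; ring
      _ = g t * Real.exp (lam * t) * Real.exp (-(lam * t)) := by ring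
      _ ≤ (h 0 + K * Real.exp ((lam - β) * t)) * Real.exp (-(lam * t)) :=
          mul_le_mul_of_nonneg_right hht' hep.le
      _ = h 0 * Real.exp (-(lam * t)) +
          K * (Real.exp ((lam - β) * t) * Real.exp (-(lam * t))) := by ring
      _ = h 0 * Real.exp (-(lam * t)) + K * Real.exp (-(β * t)) := by rw [e2]
  -- RHS tends to 0
  have t1 : Filter.Tendsto (fun t : ℝ => Real.exp (-(lam * t))) Filter.atTop (nhds 0) := by
    apply Real.tendsto_exp_neg_atTop_nhds_zero.comp
    exact Filter.Tendsto.const_mul_atTop hlam Filter.tendsto_id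
  have t2 : Filter.Tendsto (fun t : ℝ => Real.exp (-(β * t))) Filter.atTop (nhds 0) := by
    apply Real.tendsto_exp_neg_atTop_nhds_zero.comp
    exact Filter.Tendsto.const_mul_atTop hβpos Filter.tendsto_id
  have tRHS : Filter.Tendsto
      (fun t : ℝ => h 0 * Real.exp (-(lam * t)) + K * Real.exp (-(β * t)))
      Filter.atTop (nhds 0) := by
    have := (t1.const_mul (h 0)).add (t2.const_mul K)
    simpa using this
  have hgto : Filter.Tendsto g Filter.atTop (nhds 0) := by
    apply tendsto_of_tendsto_of_tendsto_of_le_of_le' tendsto_const_nhds tRHS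
    · exact Filter.Eventually.of_forall fun t => real_inner_self_nonneg
    · filter_upwards [Filter.eventually_ge_atTop 0] with t ht
      exact hbound t ht
  -- conclude
  rw [tendsto_zero_iff_norm_tendsto_zero]
  have hnorm_eq : (fun t => ‖p t‖) = fun t => Real.sqrt (g t) := by
    funext t
    rw [hgnorm t, Real.sqrt_sq (norm_nonneg _)]
  rw [hnorm_eq]
  have := (Real.continuous_sqrt.tendsto' 0 0 Real.sqrt_zero).comp hgto
  exact this
end
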